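/- Let g : ℝ → [0,∞] be measurable and locally integrable, and define G(x) = ∫₀ˣ g(y) dy (with the sign convention G(x) = −∫ₓ⁰ g for x < 0). Then for every Lebesgue measurable set A ⊆ ℝ, the image G(A) is Lebesgue measurable with λ(G(A)) ≤ ∫_A g dλ. In particular, if λ(A) = 0 and g < ∞ λ-a.e., then G(A) is a Lebesgue null set. -/

import Mathlib

open MeasureTheory

/-- The primitive `G(x) = ∫₀ˣ g(y) dy` of `g : ℝ → [0,∞]`, with the usual
sign convention `G(x) = -∫ₓ⁰ g` for `x < 0`. -/
noncomputable def primG (g : ℝ → ENNReal) (x : ℝ) : ℝ :=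
  (∫⁻ y in Set.Ioc 0 x, g y ∂volume).toReal -
    (∫⁻ y in Set.Ioc x 0, g y ∂volume).toReal

namespace PrimGAux

open Set Filter Topology

variable {g : ℝ → ENNReal}

lemma fin (hloc : ∀ K : Set ℝ, IsCompact K → ∫⁻ x in K, g x ∂volume < ⊤)
    (a b : ℝ) : (volume.withDensity g) (Set.Ioc a b) ≠ ⊤ := by
  rw [withDensity_apply _ measurableSet_Ioc]
  exact ((lintegral_mono_set Set.Ioc_subset_Icc_self).trans_lt (hloc _ isCompact_Icc)).ne

lemma add3 (hloc : ∀ K : Set ℝ, IsCompact K → ∫⁻ x in K, g x ∂volume < ⊤)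
    {a b c : ℝ} (hab : a ≤ b) (hbc : b ≤ c) :
    ((volume.withDensity g) (Set.Ioc a c)).toReal
      = ((volume.withDensity g) (Set.Ioc a b)).toReal
        + ((volume.withDensity g) (Set.Ioc b c)).toReal := by
  rw [← Set.Ioc_union_Ioc_eq_Ioc hab hbc,
    measure_union (Set.Ioc_disjoint_Ioc_of_le le_rfl) measurableSet_Ioc,
    ENNReal.toReal_add (fin hloc a b) (fin hloc b c)]

lemma primG_eq (x : ℝ) : primG g x
    = ((volume.withDensity g) (Set.Ioc 0 x)).toReal
      - ((volume.withDensity g) (Set.Ioc x 0)).toReal := by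
  rw [primG, withDensity_apply _ measurableSet_Ioc, withDensity_apply _ measurableSet_Ioc]

lemma primG_sub (hloc : ∀ K : Set ℝ, IsCompact K → ∫⁻ x in K, g x ∂volume < ⊤)
    {a b : ℝ} (hab : a ≤ b) :
    primG g b - primG g a = ((volume.withDensity g) (Set.Ioc a b)).toReal := by
  rw [primG_eq, primG_eq]
  rcases le_total 0 a with h0a | ha0
  · rw [Set.Ioc_eq_empty (b := a) (not_lt.2 h0a),
      Set.Ioc_eq_empty (b := b) (not_lt.2 (h0a.trans hab))]
    simp only [measure_empty, ENNReal.toReal_zero]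
    have h := add3 hloc h0a hab
    linarith
  · rcases le_total b 0 with hb0 | h0b
    · rw [Set.Ioc_eq_empty (a := a) (not_lt.2 (hab.trans hb0)),
        Set.Ioc_eq_empty (a := b) (not_lt.2 hb0)]
      simp only [measure_empty, ENNReal.toReal_zero]
      have h := add3 hloc hab hb0
      linarith
    · rw [Set.Ioc_eq_empty (a := a) (not_lt.2 ha0),
        Set.Ioc_eq_empty (b := b) (not_lt.2 h0b)]
      simp only [measure_empty, ENNReal.toReal_zero]
      have h := add3 hloc ha0 h0b
      linarith

lemma mono (hloc : ∀ K : Set ℝ, IsCompact K → ∫⁻ x in K, g x ∂volume < ⊤) :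
    Monotone (primG g) := by
  intro a b hab
  have h := primG_sub hloc hab
  have h2 : (0:ℝ) ≤ ((volume.withDensity g) (Set.Ioc a b)).toReal := ENNReal.toReal_nonneg
  linarith

lemma iInter_Ioc_right (x : ℝ) : (⋂ n : ℕ, Set.Ioc x (x + 1/(n+1))) = ∅ := by
  ext y
  simp only [Set.mem_iInter, Set.mem_Ioc, Set.mem_empty_iff_false, iff_false, not_forall]
  by_contra h
  push_neg at h
  obtain ⟨n, hn⟩ := exists_nat_one_div_lt (sub_pos.2 (h 0).1)
  exact absurd (h n).2 (by push_cast; push_cast at hn; linarith)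

lemma iInter_Ioc_left (x : ℝ) : (⋂ n : ℕ, Set.Ioc (x - 1/(n+1)) x) = {x} := by
  ext y
  simp only [Set.mem_iInter, Set.mem_Ioc, Set.mem_singleton_iff]
  constructor
  · intro h
    rcases lt_or_ge y x with hyx | hxy
    · obtain ⟨n, hn⟩ := exists_nat_one_div_lt (sub_pos.2 hyx)
      have := (h n).1
      push_cast at hn this
      linarith
    · exact le_antisymm (h 0).2 hxy
  · rintro rfl
    intro n
    have : (0:ℝ) < 1/(n+1) := by positivity
    constructor <;> linarith

lemma antitone_right (x : ℝ) : Antitone (fun n : ℕ => Set.Ioc x (x + 1/(n+1))) := by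
  intro m n hmn
  apply Set.Ioc_subset_Ioc le_rfl
  have h1 : ((m:ℝ)+1) ≤ (n:ℝ)+1 := by exact_mod_cast Nat.succ_le_succ hmn
  have : (1:ℝ)/(n+1) ≤ 1/(m+1) := one_div_le_one_div_of_le (by positivity) h1
  linarith

lemma antitone_left (x : ℝ) : Antitone (fun n : ℕ => Set.Ioc (x - 1/(n+1)) x) := by
  intro m n hmn
  apply Set.Ioc_subset_Ioc _ le_rfl
  have h1 : ((m:ℝ)+1) ≤ (n:ℝ)+1 := by exact_mod_cast Nat.succ_le_succ hmn
  have : (1:ℝ)/(n+1) ≤ 1/(m+1) := one_div_le_one_div_of_le (by positivity) h1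
  linarith

lemma cont (hloc : ∀ K : Set ℝ, IsCompact K → ∫⁻ x in K, g x ∂volume < ⊤) :
    Continuous (primG g) := by
  have hmono := mono hloc
  rw [continuous_iff_continuousAt]
  intro x
  rw [Metric.continuousAt_iff]
  intro ε hε
  set ν := volume.withDensity g with hν
  have hR : Tendsto (fun n : ℕ => ν (Set.Ioc x (x + 1/(n+1)))) atTop (𝓝 0) := by
    have h1 := tendsto_measure_iInter_atTop (μ := ν)
      (s := fun n : ℕ => Set.Ioc x (x + 1/(n+1)))
      (fun n => measurableSet_Ioc.nullMeasurableSet) (antitone_right x)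
      ⟨0, fin hloc _ _⟩
    rwa [iInter_Ioc_right, measure_empty] at h1
  have hL : Tendsto (fun n : ℕ => ν (Set.Ioc (x - 1/(n+1)) x)) atTop (𝓝 0) := by
    have h1 := tendsto_measure_iInter_atTop (μ := ν)
      (s := fun n : ℕ => Set.Ioc (x - 1/(n+1)) x)
      (fun n => measurableSet_Ioc.nullMeasurableSet) (antitone_left x)
      ⟨0, fin hloc _ _⟩
    have h2 : ν {x} = 0 := by
      rw [hν, withDensity_apply _ (measurableSet_singleton x),
        Measure.restrict_eq_zero.2 Real.volume_singleton, lintegral_zero_measure]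
    rwa [iInter_Ioc_left, h2] at h1
  have hεpos : (0:ENNReal) < ENNReal.ofReal ε := ENNReal.ofReal_pos.2 hε
  obtain ⟨n, hn1, hn2⟩ :=
    ((hR.eventually (gt_mem_nhds hεpos)).and (hL.eventually (gt_mem_nhds hεpos))).exists
  refine ⟨1/(n+1), by positivity, ?_⟩
  intro y hy
  rw [Real.dist_eq] at hy ⊢
  rcases le_total x y with hxy | hyx
  · rw [abs_of_nonneg (sub_nonneg.2 (hmono hxy)), primG_sub hloc hxy]
    have hsub : Set.Ioc x y ⊆ Set.Ioc x (x + 1/(n+1)) := by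
      apply Set.Ioc_subset_Ioc le_rfl
      have := abs_lt.1 hy
      linarith [this.1, this.2]
    calc (ν (Set.Ioc x y)).toReal ≤ (ν (Set.Ioc x (x + 1/(n+1)))).toReal :=
          ENNReal.toReal_mono (fin hloc _ _) (measure_mono hsub)
      _ < ε := (ENNReal.lt_ofReal_iff_toReal_lt (fin hloc _ _)).1 hn1
  · rw [abs_of_nonpos (sub_nonpos.2 (hmono hyx)), neg_sub, primG_sub hloc hyx]
    have hsub : Set.Ioc y x ⊆ Set.Ioc (x - 1/(n+1)) x := by
      apply Set.Ioc_subset_Ioc _ le_rfl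
      have := abs_lt.1 hy
      linarith [this.1, this.2]
    calc (ν (Set.Ioc y x)).toReal ≤ (ν (Set.Ioc (x - 1/(n+1)) x)).toReal :=
          ENNReal.toReal_mono (fin hloc _ _) (measure_mono hsub)
      _ < ε := (ENNReal.lt_ofReal_iff_toReal_lt (fin hloc _ _)).1 hn2

/-- The Stieltjes function given by `primG g`. -/
noncomputable def SG (g : ℝ → ENNReal)
    (hloc : ∀ K : Set ℝ, IsCompact K → ∫⁻ x in K, g x ∂volume < ⊤) :
    StieltjesFunction ℝ where
  toFun := primG g
  mono' := mono hloc
  right_continuous' := fun x => (cont hloc).continuousAt.continuousWithinAt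

lemma SG_apply (hloc : ∀ K : Set ℝ, IsCompact K → ∫⁻ x in K, g x ∂volume < ⊤)
    (x : ℝ) : SG g hloc x = primG g x := rfl

lemma SG_measure (hloc : ∀ K : Set ℝ, IsCompact K → ∫⁻ x in K, g x ∂volume < ⊤) :
    (SG g hloc).measure = volume.withDensity g := by
  refine Measure.ext_of_Ioc _ _ (fun a b hab => ?_)
  rw [StieltjesFunction.measure_Ioc, SG_apply, SG_apply, primG_sub hloc hab.le,
    ENNReal.ofReal_toReal (fin hloc a b)]

lemma image_le (hloc : ∀ K : Set ℝ, IsCompact K → ∫⁻ x in K, g x ∂volume < ⊤)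
    (s : Set ℝ) : volume (primG g '' s) ≤ (SG g hloc).measure s := by
  have hmono := mono hloc
  have key : ∀ t : Set ℝ,
      (OuterMeasure.comap (primG g) volume.toOuterMeasure) t ≤ (SG g hloc).length t := by
    intro t
    rw [OuterMeasure.comap_apply, StieltjesFunction.length_eq]
    refine le_iInf fun a => le_iInf fun b => le_iInf fun hsub' => ?_
    have hsub : t ⊆ Set.Ioc a b := fun y hy => hsub' ⟨hy, not_isBot y⟩
    rcases le_total a b with hab | hba
    · calc volume.toOuterMeasure (primG g '' t)
          ≤ volume (Set.Icc (primG g a) (primG g b)) := by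
            rw [Measure.coe_toOuterMeasure]
            refine measure_mono ?_
            rintro _ ⟨y, hy, rfl⟩
            exact ⟨hmono (hsub hy).1.le, hmono (hsub hy).2⟩
        _ = ENNReal.ofReal (primG g b - primG g a) := Real.volume_Icc
        _ = ENNReal.ofReal (SG g hloc b - SG g hloc a) := rfl
    · have hempty : t = ∅ := Set.subset_empty_iff.1
        (hsub.trans (Set.Ioc_eq_empty (not_lt.2 hba)).subset)
      rw [hempty]
      simp
  have houter : volume (primG g '' s) ≤ (SG g hloc).outer s := by
    have h := (OuterMeasure.le_ofFunction
      (m := (SG g hloc).length) (m_empty := (SG g hloc).length_empty)).2 key s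
    rw [OuterMeasure.comap_apply, Measure.coe_toOuterMeasure] at h
    exact h
  have heq : (SG g hloc).measure s = (SG g hloc).outer s := by
    rw [StieltjesFunction.measure_def]
    rfl
  rw [heq]
  exact houter

lemma nullm_of_fin (hloc : ∀ K : Set ℝ, IsCompact K → ∫⁻ x in K, g x ∂volume < ⊤)
    {B : Set ℝ} (hB : MeasurableSet B) (hfinB : (SG g hloc).measure B ≠ ⊤) :
    NullMeasurableSet (primG g '' B) volume := by
  set μ := (SG g hloc).measure with hμ
  choose K hKB hKc hKlt using fun n : ℕ =>
    hB.exists_isCompact_lt_add (μ := μ) hfinB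
      (ε := ((n : ENNReal))⁻¹) (ENNReal.inv_ne_zero.2 (ENNReal.natCast_ne_top n))
  set C := ⋃ n, K n with hC
  have hCB : C ⊆ B := Set.iUnion_subset hKB
  have hnull : μ (B \ C) = 0 := by
    have hb : ∀ n : ℕ, μ (B \ C) ≤ ((n : ENNReal))⁻¹ := by
      intro n
      have h1 : μ (B \ C) ≤ μ (B \ K n) :=
        measure_mono (Set.diff_subset_diff_right (Set.subset_iUnion K n))
      have hKfin : μ (K n) ≠ ⊤ := ne_top_of_le_ne_top hfinB (measure_mono (hKB n))
      have h2 : μ (B \ K n) = μ B - μ (K n) :=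
        measure_diff (hKB n) (hKc n).measurableSet.nullMeasurableSet hKfin
      refine h1.trans ?_
      rw [h2]
      exact tsub_le_iff_left.2 (hKlt n).le
    exact le_antisymm (ge_of_tendsto' ENNReal.tendsto_inv_nat_nhds_zero hb) zero_le
  have himg : primG g '' B = (⋃ n, primG g '' K n) ∪ primG g '' (B \ C) := by
    rw [← Set.image_iUnion, ← Set.image_union, Set.union_diff_cancel hCB]
  rw [himg]
  refine NullMeasurableSet.union
    (NullMeasurableSet.iUnion fun n =>
      ((hKc n).image (cont hloc)).measurableSet.nullMeasurableSet) ?_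
  exact NullMeasurableSet.of_null
    (nonpos_iff_eq_zero.1 ((image_le hloc _).trans hnull.le))

end PrimGAux

/-- For `g : ℝ → [0,∞]` measurable and locally integrable with primitive `G`,
the image `G(A)` of any measurable set `A` is (null) measurable with
`λ(G(A)) ≤ ∫_A g dλ`; in particular if `λ(A) = 0` and `g < ∞` a.e. then
`G(A)` is null. -/
theorem volume_image_primG_le
    (g : ℝ → ENNReal) (hmeas : Measurable g)
    (hloc : ∀ K : Set ℝ, IsCompact K → ∫⁻ x in K, g x ∂volume < ⊤) :
    ∀ A : Set ℝ, MeasurableSet A →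
      NullMeasurableSet (primG g '' A) volume ∧
      volume (primG g '' A) ≤ ∫⁻ x in A, g x ∂volume ∧
      ((∀ᵐ x ∂volume, g x ≠ ⊤) → volume A = 0 → volume (primG g '' A) = 0) := by
  intro A hA
  have hbound : volume (primG g '' A) ≤ ∫⁻ x in A, g x ∂volume := by
    calc volume (primG g '' A) ≤ (PrimGAux.SG g hloc).measure A := PrimGAux.image_le hloc A
      _ = (volume.withDensity g) A := by rw [PrimGAux.SG_measure hloc]
      _ = ∫⁻ x in A, g x ∂volume := withDensity_apply g hA
  refine ⟨?_, hbound, fun _ hA0 => ?_⟩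
  · have hcover : A = ⋃ n : ℕ, A ∩ Set.Ioc (-(n+1) : ℝ) (n+1) := by
      ext x
      simp only [Set.mem_iUnion, Set.mem_inter_iff, Set.mem_Ioc]
      constructor
      · intro hx
        obtain ⟨n, hn⟩ := exists_nat_gt |x|
        have h := abs_lt.1 hn
        exact ⟨n, hx, by linarith [h.1], by linarith [h.2]⟩
      · rintro ⟨n, h, -⟩
        exact h
    rw [hcover, Set.image_iUnion]
    refine NullMeasurableSet.iUnion fun n =>
      PrimGAux.nullm_of_fin hloc (hA.inter measurableSet_Ioc) ?_
    refine ne_top_of_le_ne_top ?_ (measure_mono Set.inter_subset_right)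
    rw [StieltjesFunction.measure_Ioc]
    exact ENNReal.ofReal_ne_top
  · have hz : ∫⁻ x in A, g x ∂volume = 0 := by
      rw [Measure.restrict_eq_zero.2 hA0, lintegral_zero_measure]
    exact nonpos_iff_eq_zero.1 (hbound.trans hz.le)
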